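/- Let Q ∈ ℝ^{2×2} be symmetric positive definite with Q₁₂ < 0, and let g ∈ ℝ² satisfy −Q₂₂g₁ + Q₁₂g₂ ≤ 0 and Q₁₂g₁ − Q₁₁g₂ ≤ 0. Then exactly one of the following holds: (a) g₁ ≥ 0 and g₂ ≥ 0, or (b) g₂Q₁₂/Q₂₂ ≤ g₁ < 0, or (c) g₁Q₁₂/Q₁₁ ≤ g₂ < 0; moreover cases (b) and (c) cannot hold simultaneously. -/

import Mathlib

open Matrix

/-- Case analysis of Proposition 3.1, Case 1: for `Q` symmetric positive
definite with `Q₁₂ < 0` and `-Q⁻¹g` componentwise nonpositive, exactly one of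
(a) `g₁ ≥ 0 ∧ g₂ ≥ 0`, (b) `g₂Q₁₂/Q₂₂ ≤ g₁ < 0`, (c) `g₁Q₁₂/Q₁₁ ≤ g₂ < 0`
holds; in particular (b) and (c) cannot hold simultaneously. -/
theorem stmt_10 (Q : Matrix (Fin 2) (Fin 2) ℝ) (hQsymm : Q.IsSymm)
    (hQpd : Q.PosDef) (g : Fin 2 → ℝ)
    (hQ12 : Q 0 1 < 0)
    (hx1 : -Q 1 1 * g 0 + Q 0 1 * g 1 ≤ 0)
    (hx2 : Q 0 1 * g 0 - Q 0 0 * g 1 ≤ 0) :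
    ((0 ≤ g 0 ∧ 0 ≤ g 1) ∨
      (g 1 * Q 0 1 / Q 1 1 ≤ g 0 ∧ g 0 < 0) ∨
      (g 0 * Q 0 1 / Q 0 0 ≤ g 1 ∧ g 1 < 0)) ∧
    ¬ ((0 ≤ g 0 ∧ 0 ≤ g 1) ∧ (g 1 * Q 0 1 / Q 1 1 ≤ g 0 ∧ g 0 < 0)) ∧
    ¬ ((0 ≤ g 0 ∧ 0 ≤ g 1) ∧ (g 0 * Q 0 1 / Q 0 0 ≤ g 1 ∧ g 1 < 0)) ∧
    ¬ ((g 1 * Q 0 1 / Q 1 1 ≤ g 0 ∧ g 0 < 0) ∧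
       (g 0 * Q 0 1 / Q 0 0 ≤ g 1 ∧ g 1 < 0)) := by
  have h0 := hQpd.dotProduct_mulVec_pos (x := Pi.single 0 1) (by intro h; simpa using congrFun h 0)
  have h1 := hQpd.dotProduct_mulVec_pos (x := Pi.single 1 1) (by intro h; simpa using congrFun h 1)
  simp [Matrix.mulVec, dotProduct, Fin.sum_univ_two, Pi.single_apply] at h0 h1
  -- h0 : 0 < Q 0 0, h1 : 0 < Q 1 1
  have hb : g 1 * Q 0 1 / Q 1 1 ≤ g 0 := by
    rw [div_le_iff₀ h1]
    nlinarith
  have hc : g 0 * Q 0 1 / Q 0 0 ≤ g 1 := by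
    rw [div_le_iff₀ h0]
    nlinarith
  have hnot : ¬ (g 0 < 0 ∧ g 1 < 0) := by
    rintro ⟨ha, hbneg⟩
    nlinarith
  refine ⟨?_, ?_, ?_, ?_⟩
  · rcases lt_or_ge (g 0) 0 with h | h
    · exact Or.inr (Or.inl ⟨hb, h⟩)
    · rcases lt_or_ge (g 1) 0 with h' | h'
      · exact Or.inr (Or.inr ⟨hc, h'⟩)
      · exact Or.inl ⟨h, h'⟩
  · rintro ⟨⟨h, _⟩, ⟨_, h'⟩⟩; linarith
  · rintro ⟨⟨_, h⟩, ⟨_, h'⟩⟩; linarith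
  · rintro ⟨⟨_, h⟩, ⟨_, h'⟩⟩; exact hnot ⟨h, h'⟩
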